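/- Let A → B₁ and A → B₂ be ring maps, B₀ = B₁⊗_A B₂, E₂ a B₂-module, E₀ = B₁⊗_A E₂, and let f₀ : E₀ → F₀ be a surjection of B₀-modules with kernel N₀. Then the map N₀ → Ω_{B₁/A} ⊗_{B₁} F₀ sending an element Σ bᵢ⊗eᵢ ∈ N₀ ⊆ B₁⊗_A E₂ to Σ dbᵢ ⊗ f₀(1⊗eᵢ) is a well-defined B₀-linear map. -/
import Mathlib


/-!
STATEMENT 7: `A → B₁`, `A → B₂` ring maps, `B₀ = B₁ ⊗_A B₂`, `E₂` a `B₂`-module,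
`E₀ = B₁ ⊗_A E₂` (realized as the base change `B₀ ⊗_{B₂} E₂`, whose pure tensors
`(b₁⊗b₂) ⊗ e` correspond to `b₁ ⊗ (b₂•e)`), and `f₀ : E₀ → F₀` a surjection of
`B₀`-modules with kernel `N₀`.  Then the assignment `Σ bᵢ⊗eᵢ ↦ Σ dbᵢ ⊗ f₀(1⊗eᵢ)`
(written here with the tensor factors of `F₀ ⊗_{B₁} Ω_{B₁/A}` swapped) gives a
well-defined additive map `δ` on `E₀` whose restriction to `N₀ = ker f₀`
is `B₀`-linear.
-/

open TensorProduct

attribute [local instance] Algebra.TensorProduct.rightAlgebra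

section Aux

variable {A B₁ B₂ : Type*} [CommRing A] [CommRing B₁] [CommRing B₂]
    [Algebra A B₁] [Algebra A B₂]
    {E₂ F₀ : Type*} [AddCommGroup E₂] [Module B₂ E₂]
    [AddCommGroup F₀] [Module (B₁ ⊗[A] B₂) F₀]
    [Module B₁ F₀] [IsScalarTower B₁ (B₁ ⊗[A] B₂) F₀]
    (f₀ : ((B₁ ⊗[A] B₂) ⊗[B₂] E₂) →ₗ[B₁ ⊗[A] B₂] F₀)

lemma smul_f₀ (c₁ : B₁) (x : (B₁ ⊗[A] B₂) ⊗[B₂] E₂) :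
    c₁ • f₀ x = f₀ ((c₁ ⊗ₜ[A] (1 : B₂)) • x) := by
  rw [map_smul, show ((c₁ ⊗ₜ[A] (1 : B₂)) : B₁ ⊗[A] B₂) = algebraMap B₁ _ c₁ from rfl,
    algebraMap_smul]

lemma smul_tmul_E (r m : B₁ ⊗[A] B₂) (e : E₂) :
    r • (m ⊗ₜ[B₂] e) = (r * m) ⊗ₜ[B₂] e := by
  rw [TensorProduct.smul_tmul', smul_eq_mul]

noncomputable def d3 (b₁ : B₁) (b₂ : B₂) :
    E₂ →+ F₀ ⊗[B₁] KaehlerDifferential A B₁ where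
  toFun e := f₀ (((1 : B₁) ⊗ₜ[A] b₂) ⊗ₜ[B₂] e) ⊗ₜ[B₁] KaehlerDifferential.D A B₁ b₁
  map_zero' := by simp
  map_add' e e' := by simp [TensorProduct.tmul_add, TensorProduct.add_tmul]

noncomputable def d2 (b₁ : B₁) :
    B₂ →+ E₂ →+ F₀ ⊗[B₁] KaehlerDifferential A B₁ where
  toFun b₂ := d3 f₀ b₁ b₂
  map_zero' := by ext e; simp [d3]
  map_add' b₂ b₂' := by ext e; simp [d3, TensorProduct.add_tmul, TensorProduct.tmul_add]

noncomputable def d1 :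
    B₁ →+ B₂ →+ E₂ →+ F₀ ⊗[B₁] KaehlerDifferential A B₁ where
  toFun b₁ := d2 f₀ b₁
  map_zero' := by ext b₂ e; simp [d2, d3]
  map_add' b₁ b₁' := by ext b₂ e; simp [d2, d3, TensorProduct.tmul_add]

lemma d1_balanced : ∀ (a : A) (b₁ : B₁) (b₂ : B₂),
    d1 f₀ (a • b₁) b₂ = d1 f₀ b₁ (a • b₂) := by
  intro a b₁ b₂
  ext e
  show f₀ (((1 : B₁) ⊗ₜ[A] b₂) ⊗ₜ[B₂] e) ⊗ₜ[B₁] KaehlerDifferential.D A B₁ (a • b₁)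
      = f₀ (((1 : B₁) ⊗ₜ[A] (a • b₂)) ⊗ₜ[B₂] e) ⊗ₜ[B₁] KaehlerDifferential.D A B₁ b₁
  rw [Algebra.smul_def a b₁, Derivation.leibniz, Derivation.map_algebraMap,
    smul_zero, add_zero, TensorProduct.tmul_smul, TensorProduct.smul_tmul',
    smul_f₀, smul_tmul_E, Algebra.TensorProduct.tmul_mul_tmul, one_mul, mul_one]
  congr 2
  rw [show (algebraMap A B₁ a) = a • (1 : B₁) from (Algebra.algebraMap_eq_smul_one a),
    TensorProduct.smul_tmul]

noncomputable def d0 :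
    (B₁ ⊗[A] B₂) →+ E₂ →+ F₀ ⊗[B₁] KaehlerDifferential A B₁ :=
  TensorProduct.liftAddHom (d1 f₀) (d1_balanced f₀)

lemma d0_balanced : ∀ (r : B₂) (m : B₁ ⊗[A] B₂) (e : E₂),
    d0 f₀ (r • m) e = d0 f₀ m (r • e) := by
  intro r m e
  induction m using TensorProduct.induction_on with
  | zero => simp
  | tmul b₁ b₂ =>
      have hs : ∀ c₁ : B₁, r • (c₁ ⊗ₜ[A] b₂) = c₁ ⊗ₜ[A] (r * b₂) := by
        intro c₁
        rw [Algebra.smul_def]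
        show ((1 : B₁) ⊗ₜ[A] r) * (c₁ ⊗ₜ[A] b₂) = _
        rw [Algebra.TensorProduct.tmul_mul_tmul, one_mul]
      rw [hs]
      show f₀ (((1 : B₁) ⊗ₜ[A] (r * b₂)) ⊗ₜ[B₂] e) ⊗ₜ[B₁] KaehlerDifferential.D A B₁ b₁
        = f₀ (((1 : B₁) ⊗ₜ[A] b₂) ⊗ₜ[B₂] (r • e)) ⊗ₜ[B₁] KaehlerDifferential.D A B₁ b₁
      rw [← hs 1, TensorProduct.smul_tmul]
  | add x y hx hy => rw [smul_add, map_add, map_add, AddMonoidHom.add_apply,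
      AddMonoidHom.add_apply, hx, hy]

noncomputable def δ₀ :
    ((B₁ ⊗[A] B₂) ⊗[B₂] E₂) →+ F₀ ⊗[B₁] KaehlerDifferential A B₁ :=
  TensorProduct.liftAddHom (d0 f₀) (d0_balanced f₀)

lemma δ₀_tmul (b₁ : B₁) (b₂ : B₂) (e : E₂) :
    δ₀ f₀ ((b₁ ⊗ₜ[A] b₂) ⊗ₜ[B₂] e) =
      f₀ (((1 : B₁) ⊗ₜ[A] b₂) ⊗ₜ[B₂] e) ⊗ₜ[B₁] KaehlerDifferential.D A B₁ b₁ := rfl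

lemma key (c₁ : B₁) (c₂ : B₂) (y : (B₁ ⊗[A] B₂) ⊗[B₂] E₂) :
    δ₀ f₀ ((c₁ ⊗ₜ[A] c₂) • y) = (c₁ ⊗ₜ[A] c₂) • δ₀ f₀ y
      + (((1 : B₁) ⊗ₜ[A] c₂) • f₀ y) ⊗ₜ[B₁] KaehlerDifferential.D A B₁ c₁ := by
  induction y using TensorProduct.induction_on with
  | zero => simp
  | tmul m e =>
      induction m using TensorProduct.induction_on with
      | zero => simp
      | tmul b₁ b₂ =>
          rw [smul_tmul_E, Algebra.TensorProduct.tmul_mul_tmul, δ₀_tmul, δ₀_tmul,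
            Derivation.leibniz, TensorProduct.tmul_add, TensorProduct.tmul_smul,
            TensorProduct.tmul_smul, TensorProduct.smul_tmul', TensorProduct.smul_tmul',
            TensorProduct.smul_tmul']
          have hA : c₁ • f₀ (((1 : B₁) ⊗ₜ[A] (c₂ * b₂)) ⊗ₜ[B₂] e)
              = (c₁ ⊗ₜ[A] c₂) • f₀ (((1 : B₁) ⊗ₜ[A] b₂) ⊗ₜ[B₂] e) := by
            rw [smul_f₀, smul_tmul_E, Algebra.TensorProduct.tmul_mul_tmul, ← map_smul,
              smul_tmul_E, Algebra.TensorProduct.tmul_mul_tmul]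
            simp
          have hB : b₁ • f₀ (((1 : B₁) ⊗ₜ[A] (c₂ * b₂)) ⊗ₜ[B₂] e)
              = ((1 : B₁) ⊗ₜ[A] c₂) • f₀ ((b₁ ⊗ₜ[A] b₂) ⊗ₜ[B₂] e) := by
            rw [smul_f₀, smul_tmul_E, Algebra.TensorProduct.tmul_mul_tmul, ← map_smul,
              smul_tmul_E, Algebra.TensorProduct.tmul_mul_tmul]
            simp
          rw [hA, hB]
      | add x y hx hy =>
          simp only [TensorProduct.add_tmul, smul_add, map_add, hx, hy]
          abel
  | add x y hx hy =>
      simp only [smul_add, map_add, TensorProduct.add_tmul, hx, hy]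
      abel

end Aux

theorem stmt7 {A B₁ B₂ : Type*} [CommRing A] [CommRing B₁] [CommRing B₂]
    [Algebra A B₁] [Algebra A B₂]
    {E₂ F₀ : Type*} [AddCommGroup E₂] [Module B₂ E₂]
    [AddCommGroup F₀] [Module (B₁ ⊗[A] B₂) F₀]
    [Module B₁ F₀] [IsScalarTower B₁ (B₁ ⊗[A] B₂) F₀]
    (f₀ : ((B₁ ⊗[A] B₂) ⊗[B₂] E₂) →ₗ[B₁ ⊗[A] B₂] F₀)
    (hf₀ : Function.Surjective f₀) :
    ∃ δ : ((B₁ ⊗[A] B₂) ⊗[B₂] E₂) →+ (F₀ ⊗[B₁] KaehlerDifferential A B₁),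
      -- `δ` is the globally defined assignment `b₁⊗b₂⊗e ↦ f₀(1⊗b₂⊗e) ⊗ d b₁`
      (∀ (b₁ : B₁) (b₂ : B₂) (e : E₂),
        δ ((b₁ ⊗ₜ[A] b₂) ⊗ₜ[B₂] e) =
          f₀ (((1 : B₁) ⊗ₜ[A] b₂) ⊗ₜ[B₂] e) ⊗ₜ[B₁]
            KaehlerDifferential.D A B₁ b₁) ∧
      -- its restriction to `N₀ = ker f₀` is `B₀`-linear
      ∃ β : ↥(LinearMap.ker f₀) →ₗ[B₁ ⊗[A] B₂]
          (F₀ ⊗[B₁] KaehlerDifferential A B₁),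
        ∀ x : ↥(LinearMap.ker f₀), β x = δ (x : (B₁ ⊗[A] B₂) ⊗[B₂] E₂) := by
  refine ⟨δ₀ f₀, fun b₁ b₂ e => δ₀_tmul f₀ b₁ b₂ e, ?_⟩
  have hker : ∀ (c : B₁ ⊗[A] B₂) (x : (B₁ ⊗[A] B₂) ⊗[B₂] E₂), f₀ x = 0 →
      δ₀ f₀ (c • x) = c • δ₀ f₀ x := by
    intro c x hx
    induction c using TensorProduct.induction_on with
    | zero => simp
    | tmul c₁ c₂ => rw [key, hx, smul_zero, TensorProduct.zero_tmul, add_zero]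
    | add u v hu hv => rw [add_smul, map_add, hu, hv, add_smul]
  refine ⟨{ toFun := fun x => δ₀ f₀ (x : (B₁ ⊗[A] B₂) ⊗[B₂] E₂),
            map_add' := fun x y => by simp only [Submodule.coe_add, map_add],
            map_smul' := fun c x => by
              simp only [RingHom.id_apply, SetLike.val_smul]
              exact hker c x.1 x.2 }, fun x => rfl⟩
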